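/- Let u, k ∈ K⁴ be nonzero with u₀u₃ = u₁u₂, and let φ = ρ(u,k) ∈ Z₁ ∩ Z₂. Then the subspace 𝒢_φ = {ψ ∈ M₄(K) : (φw)₃(ψw)₀ − (φw)₂(ψw)₁ − (φw)₁(ψw)₂ + (φw)₀(ψw)₃ = 0 for all w ∈ K⁴} of M₄(K) has dimension 12 over K (so, projectively, the fiber of the bundle 𝒢 over Z₁ ∩ Z₂ has rank 11). -/
import Mathlib


open Matrix
variable {K : Type*} [Field K]

/-- The rank-one matrix `ρ(u,k)ᵢⱼ = uᵢkⱼ`. -/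
def rho (u k : Fin 4 → K) : Matrix (Fin 4) (Fin 4) K :=
  Matrix.of fun i j => u i * k j

/-- The intersection `𝒢_φ` of the tangent spaces at `φ` to all point conditions of
the quadric `Q = V(x₀x₃ - x₁x₂)`. -/
def Gfiber (φ : Matrix (Fin 4) (Fin 4) K) : Set (Matrix (Fin 4) (Fin 4) K) :=
  {ψ | ∀ w : Fin 4 → K,
    φ.mulVec w 3 * ψ.mulVec w 0 - φ.mulVec w 2 * ψ.mulVec w 1
      - φ.mulVec w 1 * ψ.mulVec w 2 + φ.mulVec w 0 * ψ.mulVec w 3 = 0}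

/-- The linear map whose kernel is `𝒢_{ρ(u,k)}`. -/
def fmap (u : Fin 4 → K) : Matrix (Fin 4) (Fin 4) K →ₗ[K] (Fin 4 → K) where
  toFun ψ := fun j => u 3 * ψ 0 j - u 2 * ψ 1 j - u 1 * ψ 2 j + u 0 * ψ 3 j
  map_add' ψ χ := by funext j; simp only [Matrix.add_apply, Pi.add_apply]; ring
  map_smul' c ψ := by
    funext j
    simp only [Matrix.smul_apply, smul_eq_mul, RingHom.id_apply, Pi.smul_apply]
    ring

lemma gfiber_eq_ker [CharZero K] (u k : Fin 4 → K) (hk : k ≠ 0) :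
    Gfiber (rho u k) = (LinearMap.ker (fmap u) : Set (Matrix (Fin 4) (Fin 4) K)) := by
  ext ψ
  set c : Fin 4 → K := fmap u ψ with hc
  constructor
  · intro hψ
    -- The defining condition factors as `(k ⬝ᵥ w) * (c ⬝ᵥ w) = 0`.
    have hprod : ∀ w : Fin 4 → K, (k ⬝ᵥ w) * (c ⬝ᵥ w) = 0 := by
      intro w
      have h := hψ w
      simp only [rho, Matrix.mulVec, dotProduct, Matrix.of_apply,
        Fin.sum_univ_four] at h ⊢
      simp only [hc, fmap, LinearMap.coe_mk, AddHom.coe_mk]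
      linear_combination h
    obtain ⟨j₀, hj₀⟩ := Function.ne_iff.mp hk
    simp only [Pi.zero_apply] at hj₀
    have hlin : ∀ (v w : Fin 4 → K) (t : K),
        v ⬝ᵥ (w + t • (Pi.single j₀ 1 : Fin 4 → K)) = v ⬝ᵥ w + t * v j₀ := by
      intro v w t
      rw [dotProduct_add, dotProduct_smul, dotProduct_single]
      simp [smul_eq_mul]
    have hbw : ∀ w : Fin 4 → K, c ⬝ᵥ w = 0 := by
      intro w
      have h0 := hprod w
      have h1 := hprod (w + (1 : K) • (Pi.single j₀ 1 : Fin 4 → K))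
      have hm1 := hprod (w + (-1 : K) • (Pi.single j₀ 1 : Fin 4 → K))
      rw [hlin k w, hlin c w] at h1 hm1
      have hb0 : c j₀ = 0 := by
        have h2 : (2 : K) * (k j₀ * c j₀) = 0 := by linear_combination h1 + hm1 - 2 * h0
        have h3 : k j₀ * c j₀ = 0 := by
          have : (2 : K) ≠ 0 := two_ne_zero
          exact (mul_eq_zero.mp h2).resolve_left this
        exact (mul_eq_zero.mp h3).resolve_left hj₀
      rw [hb0] at h1
      have h4 : k j₀ * (c ⬝ᵥ w) = 0 := by linear_combination h1 - h0
      exact (mul_eq_zero.mp h4).resolve_left hj₀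
    have : c = 0 := by
      funext j
      have := hbw (Pi.single j 1)
      rwa [dotProduct_single, mul_one] at this
    simpa [hc] using this
  · intro hψ w
    simp only [SetLike.mem_coe, LinearMap.mem_ker] at hψ
    have h : ∀ j, u 3 * ψ 0 j - u 2 * ψ 1 j - u 1 * ψ 2 j + u 0 * ψ 3 j = 0 := by
      intro j
      have := congrFun hψ j
      simpa [fmap] using this
    simp only [rho, Matrix.mulVec, dotProduct, Matrix.of_apply, Fin.sum_univ_four]
    linear_combination
      (k 0 * w 0 + k 1 * w 1 + k 2 * w 2 + k 3 * w 3) *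
        (w 0 * h 0 + w 1 * h 1 + w 2 * h 2 + w 3 * h 3)

lemma fmap_surjective (u : Fin 4 → K) (hu : u ≠ 0) :
    Function.Surjective (fmap u) := by
  obtain ⟨i, hi⟩ := Function.ne_iff.mp hu
  simp only [Pi.zero_apply] at hi
  intro v
  fin_cases i
  · exact ⟨Matrix.of fun r j => if r = 3 then v j / u 0 else 0, by
      funext j; simp [fmap]; rw [mul_comm, div_mul_cancel₀ _ (by simpa using hi)]⟩
  · exact ⟨Matrix.of fun r j => if r = 2 then -(v j / u 1) else 0, by
      funext j; simp [fmap]; rw [mul_comm, div_mul_cancel₀ _ (by simpa using hi)]⟩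
  · exact ⟨Matrix.of fun r j => if r = 1 then -(v j / u 2) else 0, by
      funext j; simp [fmap]; rw [mul_comm, div_mul_cancel₀ _ (by simpa using hi)]⟩
  · exact ⟨Matrix.of fun r j => if r = 0 then v j / u 3 else 0, by
      funext j; simp [fmap]; rw [mul_comm, div_mul_cancel₀ _ (by simpa using hi)]⟩

/-- Over a point `φ = ρ(u,k)` of `Z₁ ∩ Z₂`, the intersection `𝒢_φ` of the tangent
spaces to all point conditions has (affine) dimension 12, i.e. the bundle `𝒢`
has projective rank 11. -/
theorem rank_G [IsAlgClosed K] [CharZero K]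
    (u k : Fin 4 → K) (hu : u ≠ 0) (hk : k ≠ 0)
    (hQ : u 0 * u 3 = u 1 * u 2) :
    Module.finrank K ↥(Submodule.span K (Gfiber (rho u k))) = 12 := by
  rw [gfiber_eq_ker u k hk, Submodule.span_eq]
  have hadd := LinearMap.finrank_range_add_finrank_ker (fmap u)
  have hrange : LinearMap.range (fmap u) = ⊤ :=
    LinearMap.range_eq_top.mpr (fmap_surjective u hu)
  rw [hrange, finrank_top] at hadd
  have h1 : Module.finrank K (Fin 4 → K) = 4 := by simp
  have h2 : Module.finrank K (Matrix (Fin 4) (Fin 4) K) = 16 := by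
    rw [Module.finrank_matrix]; simp
  rw [h1, h2] at hadd
  omega
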